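/- Let S = ω₁ × ℚ with the lexicographic order, where ω₁ is the first uncountable ordinal. Then for every a < b in S, the open interval (a,b) is order-isomorphic to (ℚ, ≤); in particular, the lexicographic order on S is homogeneous but not globally homogeneous. -/

import Mathlib

/-- A linear order is homogeneous if all open intervals between pairs `a < b` are pairwise
order-isomorphic, and similarly for initial and final open segments. -/
def HomogeneousOrder (S : Type*) [LinearOrder S] : Prop :=
  ∀ a b a' b' : S, a < b → a' < b' →
    Nonempty (Set.Ioo a b ≃o Set.Ioo a' b') ∧
    Nonempty (Set.Iio a ≃o Set.Iio a') ∧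
    Nonempty (Set.Ioi a ≃o Set.Ioi a')

/-- A linear order is globally homogeneous if every open interval of the form `(-∞,a)`,
`(a,b)` with `a < b`, or `(a,∞)` is order-isomorphic to the whole order. -/
def GloballyHomogeneousOrder (S : Type*) [LinearOrder S] : Prop :=
  ∀ a b : S,
    Nonempty (Set.Iio a ≃o S) ∧ Nonempty (Set.Ioi a ≃o S) ∧
    (a < b → Nonempty (Set.Ioo a b ≃o S))

/-- `ω₁ × ℚ` with the lexicographic order, `ω₁` being (the set of ordinals below) the first
uncountable ordinal. -/
abbrev OmegaOneTimesQ : Type 1 :=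
  Lex ({o : Ordinal // o < (Cardinal.aleph 1).ord} × ℚ)

open Set Cardinal Ordinal

namespace Stmt5Aux

instance : DenselyOrdered OmegaOneTimesQ := ⟨by
  rintro x y hxy
  rcases (Prod.Lex.lt_iff (x := x) (y := y)).1 hxy with h | ⟨h1, h2⟩
  · exact ⟨toLex ((ofLex x).1, (ofLex x).2 + 1),
      Prod.Lex.lt_iff.2 (Or.inr ⟨rfl, lt_add_one _⟩),
      Prod.Lex.lt_iff.2 (Or.inl h)⟩
  · obtain ⟨m, hm1, hm2⟩ := exists_between h2
    exact ⟨toLex ((ofLex x).1, m),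
      Prod.Lex.lt_iff.2 (Or.inr ⟨rfl, hm1⟩),
      Prod.Lex.lt_iff.2 (Or.inr ⟨h1, hm2⟩)⟩⟩

lemma countable_Iio (b : OmegaOneTimesQ) : (Set.Iio b).Countable := by
  have hb1 : (ofLex b).1.1 + 1 < (Cardinal.aleph 1).ord := by
    rw [Ordinal.add_one_eq_succ]
    exact (Cardinal.isSuccLimit_ord (aleph0_le_aleph 1)).succ_lt (ofLex b).1.2
  have hcnt : Countable {γ : Ordinal // γ < (ofLex b).1.1 + 1} := by
    rw [← Cardinal.mk_le_aleph0_iff]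
    have : #{γ : Ordinal // γ < (ofLex b).1.1 + 1} = Cardinal.lift.{1} ((ofLex b).1.1 + 1).card :=
      Ordinal.mk_Iio_ordinal _
    rw [this, ← Cardinal.lift_aleph0.{1, 0}, Cardinal.lift_le]
    have hcard := Cardinal.lt_ord.1 hb1
    exact Order.lt_succ_iff.mp (lt_of_lt_of_le hcard (le_of_eq Cardinal.succ_aleph0.symm))
  rw [← Set.countable_coe_iff]
  refine Function.Injective.countable
    (f := fun x : ↥(Set.Iio b) =>
      ((⟨(ofLex x.1).1.1, ?_⟩ : {γ : Ordinal // γ < (ofLex b).1.1 + 1}), (ofLex x.1).2)) ?_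
  · rw [Ordinal.add_one_eq_succ, Order.lt_succ_iff]
    rcases (Prod.Lex.lt_iff (x := x.1) (y := b)).1 x.2 with h | ⟨h1, _⟩
    · exact le_of_lt h
    · exact le_of_eq (congrArg Subtype.val h1)
  · rintro x y hxy
    simp only [Prod.mk.injEq, Subtype.mk.injEq] at hxy
    apply Subtype.ext
    show toLex (ofLex x.1) = toLex (ofLex y.1)
    exact congrArg toLex (Prod.ext (Subtype.ext hxy.1) hxy.2)

lemma ioo_iso_q (a b : OmegaOneTimesQ) (h : a < b) : Nonempty (↥(Set.Ioo a b) ≃o ℚ) := by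
  have : Countable ↥(Set.Ioo a b) :=
    ((countable_Iio b).mono Set.Ioo_subset_Iio_self).to_subtype
  have : Nonempty ↥(Set.Ioo a b) := (Set.nonempty_Ioo.2 h).to_subtype
  exact Order.iso_of_countable_dense _ _

lemma iio_iso_q (a : OmegaOneTimesQ) : Nonempty (↥(Set.Iio a) ≃o ℚ) := by
  have : Countable ↥(Set.Iio a) := (countable_Iio a).to_subtype
  exact Order.iso_of_countable_dense _ _


lemma card_bound {α' : Ordinal} (hα' : α' < (Cardinal.aleph 1).ord)
    {δ : Ordinal} (hδ : δ < (Cardinal.aleph 1).ord) (z : Ordinal) (hz : z ≤ δ) :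
    α' + 1 + z < (Cardinal.aleph 1).ord := by
  rw [Cardinal.lt_ord, Ordinal.card_add, Ordinal.card_add]
  have h1 : ℵ₀ ≤ Cardinal.aleph 1 := aleph0_le_aleph 1
  refine Cardinal.add_lt_of_lt h1 (Cardinal.add_lt_of_lt h1 (Cardinal.lt_ord.1 hα') ?_) ?_
  · simpa using lt_of_lt_of_le Cardinal.one_lt_aleph0 h1
  · exact lt_of_le_of_lt (Ordinal.card_le_card hz) (Cardinal.lt_ord.1 hδ)

lemma ioi_iso (a a' : OmegaOneTimesQ) : Nonempty (↥(Set.Ioi a) ≃o ↥(Set.Ioi a')) := by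
  classical
  set α : Ordinal := (ofLex a).1.1 with hαdef
  have hα : α < (Cardinal.aleph 1).ord := (ofLex a).1.2
  set q : ℚ := (ofLex a).2 with hqdef
  set α' : Ordinal := (ofLex a').1.1 with hα'def
  have hα' : α' < (Cardinal.aleph 1).ord := (ofLex a').1.2
  set q' : ℚ := (ofLex a').2 with hq'def
  obtain ⟨h⟩ : Nonempty (↥(Set.Ioi q) ≃o ↥(Set.Ioi q')) := Order.iso_of_countable_dense _ _
  -- membership characterization
  have mem_iff : ∀ (c : OmegaOneTimesQ) (x : OmegaOneTimesQ),
      c < x ↔ ((ofLex c).1.1 < (ofLex x).1.1 ∨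
        ((ofLex x).1.1 = (ofLex c).1.1 ∧ (ofLex c).2 < (ofLex x).2)) := by
    intro c x
    rw [show c = toLex (ofLex c) from rfl, show x = toLex (ofLex x) from rfl,
      Prod.Lex.lt_iff]
    constructor
    · rintro (h1 | ⟨h1, h2⟩)
      · exact Or.inl h1
      · exact Or.inr ⟨(congrArg Subtype.val h1).symm, h2⟩
    · rintro (h1 | ⟨h1, h2⟩)
      · exact Or.inl h1
      · exact Or.inr ⟨Subtype.ext h1.symm, h2⟩
  -- ordinal successor facts
  have hsle : ∀ {β δ : Ordinal}, β < δ → β + 1 ≤ δ := by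
    intro β δ hβδ; rwa [Ordinal.add_one_eq_succ, Order.succ_le_iff]
  have Fgt : ∀ (β z : Ordinal), β < β + 1 + z := fun β z =>
    lt_of_lt_of_le (by rw [Ordinal.add_one_eq_succ]; exact Order.lt_succ β)
      (le_self_add)
  have Fmono : ∀ {δ ε : Ordinal}, α < δ → δ < ε →
      α' + 1 + (δ - (α + 1)) < α' + 1 + (ε - (α + 1)) := by
    intro δ ε hδ hδε
    rw [add_lt_add_iff_left]
    rw [Ordinal.sub_lt_of_le (hsle hδ), Ordinal.add_sub_cancel_of_le (hsle (hδ.trans hδε))]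
    exact hδε
  -- extend h to a total map on ℚ
  let hQ : ℚ → ℚ := fun t => if ht : q < t then (h ⟨t, ht⟩ : ℚ) else t
  have hQgt : ∀ {t : ℚ}, q < t → q' < hQ t := by
    intro t ht
    simp only [hQ, dif_pos ht]
    exact (h ⟨t, ht⟩).2
  have hQmono : ∀ {s t : ℚ}, q < s → s < t → hQ s < hQ t := by
    intro s t hs hst
    simp only [hQ, dif_pos hs, dif_pos (hs.trans hst)]
    exact Subtype.coe_lt_coe.2 (h.lt_iff_lt.2 (Subtype.mk_lt_mk.2 hst))
  have hQsurj : ∀ {u : ℚ}, q' < u → ∃ s, q < s ∧ hQ s = u := by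
    intro u hu
    refine ⟨(h.symm ⟨u, hu⟩ : ℚ), (h.symm ⟨u, hu⟩).2, ?_⟩
    show (if ht : q < ((h.symm ⟨u, hu⟩ : ↥(Set.Ioi q)) : ℚ) then (h ⟨_, ht⟩ : ℚ) else _) = u
    rw [dif_pos (show q < ((h.symm ⟨u, hu⟩ : ↥(Set.Ioi q)) : ℚ) from (h.symm ⟨u, hu⟩).2)]
    have heq : (⟨((h.symm ⟨u, hu⟩ : ↥(Set.Ioi q)) : ℚ), (h.symm ⟨u, hu⟩).2⟩ : ↥(Set.Ioi q))
        = h.symm ⟨u, hu⟩ := Subtype.ext rfl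
    have h2 := congrArg (fun z : ↥(Set.Ioi q) => ((h z : ↥(Set.Ioi q')) : ℚ)) heq
    simp only [OrderIso.apply_symm_apply] at h2
    exact h2
  -- the function
  let g : ↥(Set.Ioi a) → OmegaOneTimesQ := fun x =>
    if (ofLex x.1).1.1 = α then
      toLex (⟨α', hα'⟩, hQ (ofLex x.1).2)
    else
      toLex (⟨α' + 1 + ((ofLex x.1).1.1 - (α + 1)),
        card_bound hα' (ofLex x.1).1.2 _ (Ordinal.sub_le_self _ _)⟩, (ofLex x.1).2)
  have geq1 : ∀ (x : ↥(Set.Ioi a)), (ofLex x.1).1.1 = α →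
      g x = toLex (⟨α', hα'⟩, hQ (ofLex x.1).2) := fun x hx => if_pos hx
  have geq2 : ∀ (x : ↥(Set.Ioi a)), ¬ (ofLex x.1).1.1 = α →
      g x = toLex (⟨α' + 1 + ((ofLex x.1).1.1 - (α + 1)),
        card_bound hα' (ofLex x.1).1.2 _ (Ordinal.sub_le_self _ _)⟩, (ofLex x.1).2) :=
    fun x hx => if_neg hx
  have hαlt : ∀ (x : ↥(Set.Ioi a)), (ofLex x.1).1.1 ≠ α → α < (ofLex x.1).1.1 := by
    intro x hx
    rcases (mem_iff a x.1).1 x.2 with h1 | ⟨h1, _⟩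
    · exact h1
    · exact absurd h1 hx
  have hqlt : ∀ (x : ↥(Set.Ioi a)), (ofLex x.1).1.1 = α → q < (ofLex x.1).2 := by
    intro x hx
    rcases (mem_iff a x.1).1 x.2 with h1 | ⟨_, h2⟩
    · exact absurd h1 (by rw [hx]; exact lt_irrefl α)
    · exact h2
  have hmem : ∀ x, g x ∈ Set.Ioi a' := by
    intro x
    rw [Set.mem_Ioi, mem_iff]
    by_cases hx : (ofLex x.1).1.1 = α
    · rw [geq1 x hx]
      exact Or.inr ⟨rfl, hQgt (hqlt x hx)⟩
    · rw [geq2 x hx]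
      exact Or.inl (Fgt α' _)
  let f : ↥(Set.Ioi a) → ↥(Set.Ioi a') := fun x => ⟨g x, hmem x⟩
  have hmono : StrictMono f := by
    intro x y hxy
    show g x < g y
    have hxy' := (mem_iff x.1 y.1).1 hxy
    by_cases hx : (ofLex x.1).1.1 = α <;> by_cases hy : (ofLex y.1).1.1 = α
    · rw [geq1 x hx, geq1 y hy]
      rcases hxy' with h1 | ⟨_, h2⟩
      · rw [hx, hy] at h1; exact absurd h1 (lt_irrefl α)
      · exact (mem_iff _ _).2 (Or.inr ⟨rfl, hQmono (hqlt x hx) h2⟩)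
    · rw [geq1 x hx, geq2 y hy]
      exact (mem_iff _ _).2 (Or.inl (Fgt α' _))
    · exfalso
      have hαx := hαlt x hx
      rcases hxy' with h1 | ⟨h1, _⟩
      · have := hαx.trans h1; rw [hy] at this; exact absurd this (lt_irrefl α)
      · exact hx (h1 ▸ hy)
    · rw [geq2 x hx, geq2 y hy]
      rcases hxy' with h1 | ⟨h1, h2⟩
      · exact (mem_iff _ _).2 (Or.inl (Fmono (hαlt x hx) h1))
      · refine (mem_iff _ _).2 (Or.inr ⟨?_, h2⟩)
        show α' + 1 + ((ofLex y.1).1.1 - (α + 1)) = α' + 1 + ((ofLex x.1).1.1 - (α + 1))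
        rw [h1]
  have hsurj : Function.Surjective f := by
    intro y
    by_cases hy : (ofLex y.1).1.1 = α'
    · have hq'y : q' < (ofLex y.1).2 := by
        rcases (mem_iff a' y.1).1 y.2 with h1 | ⟨_, h2⟩
        · exact absurd h1 (by rw [hy]; exact lt_irrefl α')
        · exact h2
      obtain ⟨s, hs1, hs2⟩ := hQsurj hq'y
      have hx0mem : toLex ((⟨α, hα⟩ : {o : Ordinal // o < (Cardinal.aleph 1).ord}), s)
          ∈ Set.Ioi a := by
        rw [Set.mem_Ioi, mem_iff]; exact Or.inr ⟨rfl, hs1⟩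
      refine ⟨⟨_, hx0mem⟩, Subtype.ext ?_⟩
      show g ⟨_, hx0mem⟩ = y.1
      rw [geq1 ⟨_, hx0mem⟩ rfl]
      show _ = toLex (ofLex y.1)
      exact congrArg toLex (Prod.ext (Subtype.ext hy.symm) hs2)
    · have hαy : α' < (ofLex y.1).1.1 := by
        rcases (mem_iff a' y.1).1 y.2 with h1 | ⟨h1, _⟩
        · exact h1
        · exact absurd h1 hy
      set δ : Ordinal := α + 1 + ((ofLex y.1).1.1 - (α' + 1)) with hδdef
      have hδbound : δ < (Cardinal.aleph 1).ord :=
        card_bound hα (ofLex y.1).1.2 _ (Ordinal.sub_le_self _ _)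
      have hαδ : α < δ := Fgt α _
      have hx0mem : toLex ((⟨δ, hδbound⟩ : {o : Ordinal // o < (Cardinal.aleph 1).ord}),
          (ofLex y.1).2) ∈ Set.Ioi a := by
        rw [Set.mem_Ioi, mem_iff]; exact Or.inl hαδ
      refine ⟨⟨_, hx0mem⟩, Subtype.ext ?_⟩
      show g ⟨_, hx0mem⟩ = y.1
      rw [geq2 ⟨_, hx0mem⟩ hαδ.ne']
      show _ = toLex (ofLex y.1)
      refine congrArg toLex (Prod.ext (Subtype.ext ?_) rfl)
      show α' + 1 + (δ - (α + 1)) = (ofLex y.1).1.1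
      rw [hδdef, Ordinal.add_sub_cancel,
        Ordinal.add_sub_cancel_of_le (hsle hαy)]
  exact ⟨StrictMono.orderIsoOfSurjective f hmono hsurj⟩


lemma zero_lt_ord : (0 : Ordinal) < (Cardinal.aleph 1).ord := by
  rw [Cardinal.lt_ord, Ordinal.card_zero]
  exact lt_of_lt_of_le Cardinal.aleph0_pos (aleph0_le_aleph 1)

lemma not_countable_S : ¬ Countable OmegaOneTimesQ := by
  intro hc
  have hΩ : Countable {o : Ordinal // o < (Cardinal.aleph 1).ord} := by
    refine Function.Injective.countable
      (f := fun o : {o : Ordinal // o < (Cardinal.aleph 1).ord} =>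
        (toLex (o, (0 : ℚ)) : OmegaOneTimesQ)) ?_
    intro x y hxy
    simpa using congrArg (fun z : OmegaOneTimesQ => (ofLex z).1) hxy
  have h1 : #{o : Ordinal // o < (Cardinal.aleph 1).ord} ≤ ℵ₀ :=
    Cardinal.mk_le_aleph0_iff.2 hΩ
  have h2 : #{o : Ordinal // o < (Cardinal.aleph 1).ord}
      = Cardinal.lift.{1} ((Cardinal.aleph 1).ord).card := Ordinal.mk_Iio_ordinal _
  rw [h2, Cardinal.card_ord, ← Cardinal.lift_aleph0.{1, 0}, Cardinal.lift_le] at h1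
  exact (Cardinal.aleph0_lt_aleph_one).not_ge h1

end Stmt5Aux

theorem stmt_5 :
    (∀ a b : OmegaOneTimesQ, a < b → Nonempty (Set.Ioo a b ≃o ℚ)) ∧
    HomogeneousOrder OmegaOneTimesQ ∧ ¬ GloballyHomogeneousOrder OmegaOneTimesQ := by
  refine ⟨fun a b h => Stmt5Aux.ioo_iso_q a b h, ?_, ?_⟩
  · intro a b a' b' h h'
    obtain ⟨e1⟩ := Stmt5Aux.ioo_iso_q a b h
    obtain ⟨e2⟩ := Stmt5Aux.ioo_iso_q a' b' h'
    obtain ⟨e3⟩ := Stmt5Aux.iio_iso_q a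
    obtain ⟨e4⟩ := Stmt5Aux.iio_iso_q a'
    exact ⟨⟨e1.trans e2.symm⟩, ⟨e3.trans e4.symm⟩, Stmt5Aux.ioi_iso a a'⟩
  · intro hGH
    set a0 : OmegaOneTimesQ := toLex (⟨0, Stmt5Aux.zero_lt_ord⟩, 0) with ha0
    obtain ⟨⟨e⟩, -, -⟩ := hGH a0 a0
    have : Countable ↥(Set.Iio a0) := (Stmt5Aux.countable_Iio a0).to_subtype
    exact Stmt5Aux.not_countable_S (Countable.of_equiv _ e.toEquiv)
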